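/- Let n ≥ 1 and 2 ≤ l ≤ n. Order the set {1,1̄,…,n,n̄} by 1 < 1̄ < 2 < 2̄ < … < n < n̄. Call a subset I = {i_1 < … < i_l} of this set allowed if there is no pair a < b (a,b ∈ {1,…,n} and b a position index ≤ l) with i_b = ā. Then the number of allowed l-element subsets equals C(2n,l) − C(2n,l−2), where C denotes the binomial coefficient. -/

import Mathlib

open Finset
open scoped Classical

namespace Paper

/-- The value (as a natural number) of the `p`-th smallest element (0-based) of `I`;
junk value `0` out of range. -/
def elemV {n : ℕ} (I : Finset (Fin n)) (p : ℕ) : ℕ :=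
  ((I.sort (· ≤ ·)).map Fin.val).getD p 0

/-- The `p`-th smallest element (0-based) of `I`; junk value out of range. -/
def elemF {n : ℕ} (hn : 0 < n) (I : Finset (Fin n)) (p : ℕ) : Fin n :=
  (I.sort (· ≤ ·)).getD p ⟨0, hn⟩

/-- The minor of `z` on the rows of `I` (in increasing order) and the first `I.card` columns. -/
noncomputable def fminor {R : Type*} [CommRing R] {n : ℕ} (z : Matrix (Fin n) (Fin n) R)
    (I : Finset (Fin n)) : R :=
  if h : I.card ≤ n then
    Matrix.det (Matrix.of fun a b : Fin I.card => z (I.orderEmbOfFin rfl a) (Fin.castLE h b))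
  else 0

/-- The minor of `z` whose rows are the elements of the multiset `L` (sorted increasingly,
with multiplicity) and whose columns are the first `L.card` columns.  If `L` has a repeated
element the corresponding determinant has two equal rows, hence it is `0`. -/
noncomputable def mminor {R : Type*} [CommRing R] {N : ℕ} (z : Matrix (Fin N) (Fin N) R)
    (L : Multiset (Fin N)) : R :=
  if h : (L.sort (· ≤ ·)).length ≤ N then
    Matrix.det (Matrix.of fun a b : Fin (L.sort (· ≤ ·)).length =>
      z ((L.sort (· ≤ ·)).get a) (Fin.castLE h b))
  else 0

/-- `I ≤ J` iff `|I| ≥ |J|` and `i_s ≤ j_s` for all `s ≤ |J|` (0-based positions). -/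
def finsetLE {n : ℕ} (I J : Finset (Fin n)) : Prop :=
  J.card ≤ I.card ∧ ∀ p < J.card, elemV I p ≤ elemV J p

/-- `J ≺ I` iff `|J| < |I|`, or `|J| = |I|` and the largest element of the symmetric
difference `I Δ J` belongs to `I`. -/
def prec {n : ℕ} (J I : Finset (Fin n)) : Prop :=
  J.card < I.card ∨ (J.card = I.card ∧
    ∃ x ∈ (I \ J) ∪ (J \ I), x ∈ I ∧ ∀ y ∈ (I \ J) ∪ (J \ I), y ≤ x)

/-- `L` is a strictly decreasing list of (0-based) positions `< |J|` at which the
coordinatewise comparison of `I` and `J` alternates strictly, starting with `i > j`. -/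
def altChain {n : ℕ} (I J : Finset (Fin n)) (L : List ℕ) : Prop :=
  L.Chain' (· > ·) ∧ (∀ p ∈ L, p < J.card) ∧
    ∀ t < L.length, if Even t then elemV J (L.getD t 0) < elemV I (L.getD t 0)
      else elemV I (L.getD t 0) < elemV J (L.getD t 0)

/-- `k(I,J)`: `0` for comparable pairs; otherwise the number of switch positions in the
coordinatewise comparison of `I` and `J` (the greedy top-down alternating count, equivalently
the longest strictly alternating subsequence starting with `i > j`). -/
noncomputable def kNum {n : ℕ} (I J : Finset (Fin n)) : ℕ :=
  if finsetLE I J ∨ finsetLE J I then 0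
  else
    letI := Classical.decPred fun m => ∃ L : List ℕ, L.length = m ∧ altChain I J L
    Nat.findGreatest (fun m => ∃ L : List ℕ, L.length = m ∧ altChain I J L) J.card

/-- The symmetrised `k(I,J) = k(J,I)`, computed in the orientation where the `≺`-larger
set plays the role of `I`. -/
noncomputable def kOf {n : ℕ} (I J : Finset (Fin n)) : ℕ :=
  if prec J I then kNum I J else kNum J I

/-- The sign of the permutation rearranging the increasing enumeration of `A` into the
concatenation (elements of `B` increasing, then elements of `A \ B` increasing). -/
def signAsc {n : ℕ} (A B : Finset (Fin n)) : ℤ :=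
  (-1) ^ (∑ b ∈ B, ((A \ B).filter (· < b)).card)

/-- The sign of the permutation rearranging the decreasing enumeration of `S` into the
concatenation (elements of `A` decreasing, then elements of `S \ A` decreasing). -/
def signDesc {n : ℕ} (S A : Finset (Fin n)) : ℤ :=
  (-1) ^ (∑ a ∈ A, ((S \ A).filter (a < ·)).card)

/-- The row (index) `l` of `{1,…,n}` inside `{1,1̄,…,n,n̄}` (0-based: `l ↦ 2l`). -/
def emb0 {n : ℕ} (l : Fin n) : Fin (2 * n) := ⟨2 * l.1, by have := l.2; omega⟩

/-- The row (index) `l̄` inside `{1,1̄,…,n,n̄}` (0-based: `l̄ ↦ 2l+1`). -/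
def emb1 {n : ℕ} (l : Fin n) : Fin (2 * n) := ⟨2 * l.1 + 1, by have := l.2; omega⟩

/-- `ε_{uv}`: `1` if `v = ū`, `-1` if `u = v̄`, `0` otherwise. -/
def eps {R : Type*} [CommRing R] {n : ℕ} (u v : Fin (2 * n)) : R :=
  if u.1 % 2 = 0 ∧ v.1 = u.1 + 1 then 1
  else if v.1 % 2 = 0 ∧ u.1 = v.1 + 1 then -1 else 0

/-- `J` is forbidden if `j_b = ā` for some `1 ≤ a < b ≤ |J|` (1-based positions; `ā` has
0-based value `2a-1` in the ordering `1 < 1̄ < 2 < 2̄ < …`). -/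
def Forbidden {N : ℕ} (J : Finset (Fin N)) : Prop :=
  ∃ a b : ℕ, 1 ≤ a ∧ a < b ∧ b ≤ J.card ∧ elemV J (b - 1) = 2 * a - 1

end Paper

namespace Paper



variable {N : ℕ}

def Bad {N : ℕ} (I : Finset (Fin N)) : Prop :=
  ∃ v ∈ I, v.1 % 2 = 1 ∧ v.1 + 1 < 2 * (I.filter (· ≤ v)).card

variable {N : ℕ}

lemma elemV_eq_get {I : Finset (Fin N)} {p : ℕ} (hp : p < (I.sort (· ≤ ·)).length) :
    elemV I p = ((I.sort (· ≤ ·)).get ⟨p, hp⟩).1 := by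
  unfold elemV
  rw [List.getD_eq_getElem _ _ (by simpa using hp)]
  simp

lemma card_filter_le_get (I : Finset (Fin N)) (p : Fin (I.sort (· ≤ ·)).length) :
    (I.filter (· ≤ (I.sort (· ≤ ·)).get p)).card = p.1 + 1 := by
  have hm : StrictMono (I.sort (· ≤ ·)).get := (I.sortedLT_sort).strictMono_get
  have key : (Finset.Iic p).card = (I.filter (· ≤ (I.sort (· ≤ ·)).get p)).card := by
    apply Finset.card_nbij (i := (I.sort (· ≤ ·)).get)
    · intro q hq
      simp only [Finset.coe_Iic, Set.mem_Iic] at hq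
      simp only [Finset.coe_filter, Set.mem_setOf_eq]
      exact ⟨(Finset.mem_sort _).mp (List.get_mem _ q), hm.monotone hq⟩
    · exact fun a _ b _ h => hm.injective h
    · intro v hv
      simp only [Finset.coe_filter, Set.mem_setOf_eq] at hv
      obtain ⟨hvI, hvle⟩ := hv
      obtain ⟨q, hq⟩ := List.get_of_mem ((Finset.mem_sort (α := Fin N) (· ≤ ·)).mpr hvI)
      refine ⟨q, ?_, hq⟩
      simp only [Finset.coe_Iic, Set.mem_Iic]
      rw [← hq] at hvle
      exact hm.le_iff_le.mp hvle
  rw [← key, Fin.card_Iic]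

lemma forbidden_iff_bad (I : Finset (Fin N)) : Forbidden I ↔ Bad I := by
  constructor
  · rintro ⟨a, b, ha, hab, hb, he⟩
    have hp : b - 1 < (I.sort (· ≤ ·)).length := by
      rw [Finset.length_sort]; omega
    have hev : elemV I (b - 1) = ((I.sort (· ≤ ·)).get ⟨b - 1, hp⟩).1 := elemV_eq_get hp
    have hval : ((I.sort (· ≤ ·)).get ⟨b - 1, hp⟩).1 = 2 * a - 1 := by omega
    refine ⟨_, (Finset.mem_sort _).mp (List.get_mem _ ⟨b - 1, hp⟩), by omega, ?_⟩
    rw [card_filter_le_get I ⟨b - 1, hp⟩]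
    have hbb : (⟨b - 1, hp⟩ : Fin (I.sort (· ≤ ·)).length).1 = b - 1 := rfl
    omega
  · rintro ⟨v, hvI, hodd, hcnt⟩
    obtain ⟨q, hq⟩ := List.get_of_mem ((Finset.mem_sort (α := Fin N) (· ≤ ·)).mpr hvI)
    have hcard : (I.filter (· ≤ v)).card = q.1 + 1 := by
      rw [← hq]; exact card_filter_le_get I q
    have hqlt : q.1 < I.card := by
      exact q.2.trans_eq (Finset.length_sort _)
    refine ⟨(v.1 + 1) / 2, q.1 + 1, by omega, by omega, by omega, ?_⟩
    have : elemV I q.1 = v.1 := by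
      rw [elemV_eq_get q.2]
      exact congrArg Fin.val (by rw [Fin.eta]; exact hq)
    simp only [Nat.add_sub_cancel]
    omega



lemma filter_le_map (J : Finset (Fin N)) (v : Fin N) :
    ((J.map Fin.castSuccEmb).filter (· ≤ v.castSucc)).card = (J.filter (· ≤ v)).card := by
  rw [Finset.filter_map, Finset.card_map]
  congr 1

lemma bad_map (J : Finset (Fin N)) : Bad (J.map Fin.castSuccEmb) ↔ Bad J := by
  constructor
  · rintro ⟨v, hv, hodd, hcnt⟩
    rw [Finset.mem_map] at hv
    obtain ⟨u, hu, rfl⟩ := hv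
    have hc := filter_le_map J u
    simp only [Fin.coe_castSuccEmb, Fin.coe_castSucc] at hodd hcnt hc
    exact ⟨u, hu, hodd, by exact lt_of_lt_of_eq hcnt (congrArg (2 * ·) hc)⟩
  · rintro ⟨u, hu, hodd, hcnt⟩
    have hc := filter_le_map J u
    refine ⟨u.castSucc, Finset.mem_map_of_mem _ hu, by simpa using hodd, ?_⟩
    simp only [Fin.coe_castSucc]
    omega

lemma not_last_mem_map (J : Finset (Fin N)) : Fin.last N ∉ J.map Fin.castSuccEmb := by
  rw [Finset.mem_map]
  rintro ⟨u, _, hu⟩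
  simp only [Fin.coe_castSuccEmb] at hu
  exact absurd hu (Fin.ne_of_lt (Fin.castSucc_lt_last u))

lemma filter_insert_last (J : Finset (Fin N)) (u : Fin N) :
    ((insert (Fin.last N) (J.map Fin.castSuccEmb)).filter (· ≤ u.castSucc)).card
      = (J.filter (· ≤ u)).card := by
  rw [Finset.filter_insert, if_neg (not_le.mpr (Fin.castSucc_lt_last u))]
  exact filter_le_map J u

lemma filter_last_all (J : Finset (Fin N)) :
    ((insert (Fin.last N) (J.map Fin.castSuccEmb)).filter (· ≤ Fin.last N)).card
      = J.card + 1 := by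
  rw [Finset.filter_true_of_mem (fun x _ => Fin.le_last x),
    Finset.card_insert_of_notMem (not_last_mem_map J), Finset.card_map]

lemma bad_insert (J : Finset (Fin N)) :
    Bad (insert (Fin.last N) (J.map Fin.castSuccEmb)) ↔
      Bad J ∨ (N % 2 = 1 ∧ N + 1 < 2 * (J.card + 1)) := by
  constructor
  · rintro ⟨v, hv, hodd, hcnt⟩
    rw [Finset.mem_insert] at hv
    rcases hv with rfl | hv
    · right
      rw [filter_last_all J] at hcnt
      simp only [Fin.val_last] at hodd hcnt
      exact ⟨hodd, hcnt⟩
    · left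
      rw [Finset.mem_map] at hv
      obtain ⟨u, hu, rfl⟩ := hv
      have hc := filter_insert_last J u
      simp only [Fin.coe_castSuccEmb, Fin.coe_castSucc] at hodd hcnt hc
      exact ⟨u, hu, hodd, by exact lt_of_lt_of_eq hcnt (congrArg (2 * ·) hc)⟩
  · rintro (⟨u, hu, hodd, hcnt⟩ | ⟨hodd, hlt⟩)
    · have hc := filter_insert_last J u
      refine ⟨u.castSucc, Finset.mem_insert_of_mem (Finset.mem_map_of_mem _ hu),
        by simpa using hodd, ?_⟩
      simp only [Fin.coe_castSucc]
      omega
    · refine ⟨Fin.last N, Finset.mem_insert_self _ _, by simpa using hodd, ?_⟩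
      rw [filter_last_all J]
      simpa using hlt



noncomputable def A (N l : ℕ) : ℕ :=
  ((Finset.univ : Finset (Finset (Fin N))).filter (fun I => I.card = l ∧ ¬ Bad I)).card

lemma bad_empty : ¬ Bad (∅ : Finset (Fin N)) := by
  rintro ⟨v, hv, -⟩
  simp at hv

lemma A_zero (N : ℕ) : A N 0 = 1 := by
  unfold A
  have : ((Finset.univ : Finset (Finset (Fin N))).filter (fun I => I.card = 0 ∧ ¬ Bad I))
      = {∅} := by
    ext I
    simp only [Finset.mem_filter, Finset.mem_univ, true_and, Finset.mem_singleton,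
      Finset.card_eq_zero]
    constructor
    · rintro ⟨h, -⟩; exact h
    · rintro rfl; exact ⟨rfl, bad_empty⟩
  rw [this, Finset.card_singleton]

lemma A_nil (l : ℕ) (hl : 1 ≤ l) : A 0 l = 0 := by
  unfold A
  rw [Finset.card_eq_zero, Finset.filter_eq_empty_iff]
  intro I _
  have : I.card ≤ 0 := by
    have := Finset.card_le_univ I
    simpa using this
  rintro ⟨h, -⟩
  omega

lemma exists_map_eq {I : Finset (Fin (N + 1))} (h : Fin.last N ∉ I) :
    ∃ J : Finset (Fin N), J.map Fin.castSuccEmb = I := by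
  classical
  refine ⟨I.preimage Fin.castSucc (Fin.castSucc_injective N).injOn, ?_⟩
  ext x
  simp only [Finset.mem_map, Finset.mem_preimage, Fin.coe_castSuccEmb]
  constructor
  · rintro ⟨u, hu, rfl⟩; exact hu
  · intro hx
    have hxne : x ≠ Fin.last N := fun e => h (e ▸ hx)
    exact ⟨x.castPred hxne, by rwa [Fin.castSucc_castPred], Fin.castSucc_castPred _ _⟩

lemma A_succ (N l : ℕ) (hl : 1 ≤ l) :
    A (N + 1) l = A N l + if N % 2 = 1 ∧ N + 1 < 2 * l then 0 else A N (l - 1) := by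
  classical
  have hsplit := Finset.card_filter_add_card_filter_not
    (s := (Finset.univ : Finset (Finset (Fin (N + 1)))).filter (fun I => I.card = l ∧ ¬ Bad I))
    (p := fun I => Fin.last N ∈ I)
  have h1 : ((((Finset.univ : Finset (Finset (Fin (N + 1)))).filter
        (fun I => I.card = l ∧ ¬ Bad I))).filter (fun I => ¬ Fin.last N ∈ I)).card = A N l := by
    refine (Finset.card_nbij (fun J => J.map Fin.castSuccEmb) ?_ ?_ ?_).symm
    · intro J hJ
      simp only [Finset.coe_filter, Set.mem_setOf_eq, Finset.mem_filter, Finset.mem_univ, true_and] at hJ ⊢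
      exact ⟨⟨by rw [Finset.card_map]; exact hJ.1, fun hb => hJ.2 ((bad_map J).mp hb)⟩,
        not_last_mem_map J⟩
    · intro a _ b _ hab
      exact Finset.map_injective _ hab
    · intro I hI
      simp only [Finset.coe_filter, Set.mem_setOf_eq, Finset.mem_filter, Finset.mem_univ,
        true_and] at hI
      obtain ⟨⟨hcard, hbad⟩, hlast⟩ := hI
      obtain ⟨J, hJ⟩ := exists_map_eq hlast
      refine ⟨J, ?_, hJ⟩
      simp only [Finset.coe_filter, Set.mem_setOf_eq, Finset.mem_univ, true_and]
      constructor
      · rw [← Finset.card_map Fin.castSuccEmb, hJ]; exact hcard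
      · intro hb
        exact hbad (by rw [← hJ]; exact (bad_map J).mpr hb)
  have h2 : ((((Finset.univ : Finset (Finset (Fin (N + 1)))).filter
        (fun I => I.card = l ∧ ¬ Bad I))).filter (fun I => Fin.last N ∈ I)).card
      = if N % 2 = 1 ∧ N + 1 < 2 * l then 0 else A N (l - 1) := by
    split_ifs with hcond
    · rw [Finset.card_eq_zero, Finset.filter_eq_empty_iff]
      rintro I hI hmem
      simp only [Finset.mem_filter, Finset.mem_univ, true_and] at hI
      refine hI.2 ⟨Fin.last N, hmem, by simpa using hcond.1, ?_⟩
      rw [Finset.filter_true_of_mem (fun x _ => Fin.le_last x), hI.1]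
      simpa using hcond.2
    · refine (Finset.card_nbij (fun J => insert (Fin.last N) (J.map Fin.castSuccEmb)) ?_ ?_ ?_).symm
      · intro J hJ
        simp only [Finset.coe_filter, Set.mem_setOf_eq, Finset.mem_filter, Finset.mem_univ, true_and] at hJ ⊢
        have hc : (insert (Fin.last N) (J.map Fin.castSuccEmb)).card = J.card + 1 := by
          rw [Finset.card_insert_of_notMem (not_last_mem_map J), Finset.card_map]
        refine ⟨⟨by omega, ?_⟩, Finset.mem_insert_self _ _⟩
        intro hb
        rcases (bad_insert J).mp hb with hb' | hb'
        · exact hJ.2 hb'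
        · exact hcond ⟨hb'.1, by omega⟩
      · intro a ha b hb hab
        simp only [Finset.coe_filter, Set.mem_setOf_eq] at ha hb
        apply Finset.map_injective (Fin.castSuccEmb (n := N))
        have := congrArg (fun S => Finset.erase S (Fin.last N)) hab
        simpa [Finset.erase_insert (not_last_mem_map a),
          Finset.erase_insert (not_last_mem_map b)] using this
      · intro I hI
        simp only [Finset.coe_filter, Set.mem_setOf_eq, Finset.mem_filter, Finset.mem_univ,
          true_and] at hI
        obtain ⟨⟨hcard, hbad⟩, hlast⟩ := hI
        obtain ⟨J, hJ⟩ := exists_map_eq (Finset.notMem_erase (Fin.last N) I)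
        have hins : insert (Fin.last N) (J.map Fin.castSuccEmb) = I := by
          rw [hJ, Finset.insert_erase hlast]
        refine ⟨J, ?_, hins⟩
        simp only [Finset.coe_filter, Set.mem_setOf_eq, Finset.mem_univ, true_and]
        have hcJ : J.card = l - 1 := by
          have := Finset.card_map (f := Fin.castSuccEmb) (s := J)
          rw [hJ, Finset.card_erase_of_mem hlast, hcard] at this
          omega
        refine ⟨hcJ, fun hb => hbad ?_⟩
        rw [← hins]
        exact (bad_insert J).mpr (Or.inl hb)
  unfold A at h1 h2 ⊢
  omega

lemma A_one (N : ℕ) : A N 1 = N := by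
  induction N with
  | zero => exact A_nil 1 le_rfl
  | succ n ih =>
    rw [A_succ n 1 le_rfl, if_neg (by omega), ih, A_zero]




lemma choose_mono_half {n : ℕ} : ∀ {i j : ℕ}, i ≤ j → j ≤ n / 2 →
    Nat.choose n i ≤ Nat.choose n j := by
  intro i j
  induction j with
  | zero => intro h _; simp [Nat.le_zero.mp h]
  | succ k ih =>
    intro hij hj
    rcases Nat.lt_or_ge i (k + 1) with h | h
    · exact le_trans (ih (by omega) (by omega)) (Nat.choose_le_succ_of_lt_half_left (by omega))
    · have : i = k + 1 := by omega
      subst this; exact le_rfl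

lemma choose_anti (m k : ℕ) (hk : m + 1 ≤ k) :
    Nat.choose (2 * m) k ≤ Nat.choose (2 * m) (k - 2) := by
  rcases Nat.lt_or_ge (2 * m) k with h | h
  · simp [Nat.choose_eq_zero_of_lt h]
  · rw [← Nat.choose_symm h]
    rcases le_or_gt (k - 2) m with h2 | h2
    · exact choose_mono_half (by omega) (by omega)
    · have h3 : Nat.choose (2 * m) (k - 2) = Nat.choose (2 * m) (2 * m - (k - 2)) :=
        (Nat.choose_symm (by omega)).symm
      rw [h3]
      exact choose_mono_half (by omega) (by omega)

lemma choose_le_of (m l : ℕ) (h2 : 2 ≤ l) (hm : l ≤ m + 1) :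
    Nat.choose (2 * m) (l - 2) ≤ Nat.choose (2 * m) l := by
  rcases Nat.lt_or_ge l (m + 1) with h | h
  · exact choose_mono_half (by omega) (by omega)
  · have hl : l = m + 1 := by omega
    subst hl
    have h1 : m + 1 - 2 = 2 * m - (m + 1) := by omega
    rw [h1, Nat.choose_symm (by omega)]

lemma pascal2 (n k : ℕ) : Nat.choose (n + 2) (k + 2)
    = Nat.choose n (k + 2) + 2 * Nat.choose n (k + 1) + Nat.choose n k := by
  rw [Nat.choose_succ_succ (n + 1) (k + 1), Nat.choose_succ_succ n k,
    Nat.choose_succ_succ n (k + 1)]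
  ring

lemma A_val (m : ℕ) : ∀ l : ℕ, A (2 * m) l =
    if l = 0 then 1 else if l = 1 then 2 * m
    else Nat.choose (2 * m) l - Nat.choose (2 * m) (l - 2) := by
  induction m with
  | zero =>
    intro l
    rcases Nat.eq_zero_or_pos l with rfl | hl
    · simpa using A_zero 0
    · rw [A_nil l hl]
      rcases Nat.lt_or_ge l 2 with h | h
      · have : l = 1 := by omega
        subst this; simp
      · rw [if_neg (by omega), if_neg (by omega),
          Nat.choose_eq_zero_of_lt (by omega : 2 * 0 < l)]
        omega
  | succ m ih =>
    intro l
    have h2m : 2 * (m + 1) = 2 * m + 1 + 1 := by ring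
    rcases Nat.eq_zero_or_pos l with rfl | hl0
    · rw [h2m, A_zero]; simp
    rcases Nat.lt_or_ge l 2 with hl1 | hl2
    · have : l = 1 := by omega
      subst this
      rw [h2m, A_one]
      simp
    -- l ≥ 2
    obtain ⟨k, rfl⟩ : ∃ k, l = k + 2 := ⟨l - 2, by omega⟩
    rw [if_neg (by omega), if_neg (by omega)]
    have e1 : A (2 * m + 1 + 1) (k + 2) = A (2 * m + 1) (k + 2) +
        if (2 * m + 1) % 2 = 1 ∧ 2 * m + 1 + 1 < 2 * (k + 2) then 0
        else A (2 * m + 1) (k + 2 - 1) := A_succ (2 * m + 1) (k + 2) (by omega)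
    have e2 : A (2 * m + 1) (k + 2) = A (2 * m) (k + 2) +
        if (2 * m) % 2 = 1 ∧ 2 * m + 1 < 2 * (k + 2) then 0
        else A (2 * m) (k + 2 - 1) := A_succ (2 * m) (k + 2) (by omega)
    have e3 : A (2 * m + 1) (k + 1) = A (2 * m) (k + 1) +
        if (2 * m) % 2 = 1 ∧ 2 * m + 1 < 2 * (k + 1) then 0
        else A (2 * m) (k + 1 - 1) := A_succ (2 * m) (k + 1) (by omega)
    rw [if_neg (by omega)] at e2
    rw [if_neg (by omega)] at e3
    simp only [show k + 2 - 1 = k + 1 from rfl, show k + 1 - 1 = k from rfl] at e1 e2 e3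
    have vk2 := ih (k + 2)
    have vk1 := ih (k + 1)
    have vk0 := ih k
    rw [if_neg (by omega), if_neg (by omega)] at vk2
    -- Pascal expansions
    have hp : Nat.choose (2 * m + 2) (k + 2)
        = Nat.choose (2 * m) (k + 2) + 2 * Nat.choose (2 * m) (k + 1)
          + Nat.choose (2 * m) k := pascal2 (2 * m) k
    have hsimp2 : (2 : ℕ) * (m + 1) = 2 * m + 2 := by ring
    rw [h2m]
    rw [show (2 : ℕ) * m + 1 + 1 = 2 * m + 2 from rfl] at *
    rcases le_or_gt (k + 2) (m + 1) with hsmall | hbig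
    · -- l ≤ m + 1
      rw [if_neg (by omega)] at e1
      have hq0 : Nat.choose (2 * m) k ≤ Nat.choose (2 * m) (k + 2) := by
        have := choose_le_of m (k + 2) (by omega) (by omega)
        simpa using this
      rcases Nat.eq_zero_or_pos k with rfl | hk1
      · -- l = 2
        rw [if_neg (by omega), if_pos rfl] at vk1
        rw [if_pos rfl] at vk0
        simp only [Nat.zero_add, show (2:ℕ) - 2 = 0 from rfl, show (0:ℕ) + 2 - 2 = 0 from rfl,
          Nat.choose_zero_right, Nat.choose_one_right] at *
        omega
      rcases Nat.lt_or_ge k 2 with hk2 | hk2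
      · -- l = 3, k = 1
        have : k = 1 := by omega
        subst this
        rw [if_neg (by omega), if_neg (by omega)] at vk1
        rw [if_neg (by omega), if_pos rfl] at vk0
        have hq1 : Nat.choose (2 * m) 1 ≤ Nat.choose (2 * m) 3 := by
          have := choose_le_of m 3 (by omega) (by omega)
          simpa using this
        have hp2 : Nat.choose (2 * m + 2) 1 = 2 * m + 2 := Nat.choose_one_right _
        simp only [show (1:ℕ) + 2 = 3 from rfl, show (1:ℕ) + 1 = 2 from rfl,
          show (3:ℕ) - 2 = 1 from rfl, show (2:ℕ) - 2 = 0 from rfl,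
          show (1:ℕ) - 2 = 0 from rfl,
          Nat.choose_zero_right, Nat.choose_one_right] at *
        have hpos : 0 < Nat.choose (2 * m) 2 := Nat.choose_pos (by omega)
        omega
      · -- l ≥ 4, k ≥ 2
        obtain ⟨j, rfl⟩ : ∃ j, k = j + 2 := ⟨k - 2, by omega⟩
        rw [if_neg (by omega), if_neg (by omega)] at vk1
        rw [if_neg (by omega), if_neg (by omega)] at vk0
        have hq1 : Nat.choose (2 * m) (j + 1) ≤ Nat.choose (2 * m) (j + 3) := by
          have := choose_le_of m (j + 3) (by omega) (by omega)
          simpa using this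
        have hq2 : Nat.choose (2 * m) j ≤ Nat.choose (2 * m) (j + 2) := by
          have := choose_le_of m (j + 2) (by omega) (by omega)
          simpa using this
        have hp2 : Nat.choose (2 * m + 2) (j + 2)
            = Nat.choose (2 * m) (j + 2) + 2 * Nat.choose (2 * m) (j + 1)
              + Nat.choose (2 * m) j := pascal2 (2 * m) j
        rw [e1, e2, e3, vk2, vk1, vk0]
        simp only [Nat.add_sub_cancel, show j + 2 + 1 - 2 = j + 1 by omega,
          show j + 2 + 2 - 1 = j + 3 from rfl,
          show j + 1 + 2 = j + 3 from rfl, show j + 2 + 1 = j + 3 from rfl] at *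
        omega
    · -- l ≥ m + 2
      rw [if_pos (by omega)] at e1
      have ha : Nat.choose (2 * m) (k + 2) ≤ Nat.choose (2 * m) k := by
        have := choose_anti m (k + 2) (by omega)
        simpa using this
      have hb : Nat.choose (2 * m + 2) (k + 2) ≤ Nat.choose (2 * m + 2) k := by
        have := choose_anti (m + 1) (k + 2) (by omega)
        have h22 : 2 * (m + 1) = 2 * m + 2 := by ring
        rw [h22] at this
        simpa using this
      rcases Nat.eq_zero_or_pos k with rfl | hk1
      · -- k = 0 (l = 2), so m = 0
        have hm0 : m = 0 := by omega
        subst hm0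
        rw [if_neg (by omega), if_pos rfl] at vk1
        rw [e1, e2, vk2, vk1]
        decide
      · have hq1 : Nat.choose (2 * m) (k + 1) ≤ Nat.choose (2 * m) (k - 1) := by
          have := choose_anti m (k + 1) (by omega)
          simpa using this
        rw [if_neg (by omega), if_neg (by omega)] at vk1
        rw [e1, e2, vk2, vk1]
        simp only [Nat.add_sub_cancel, show k + 1 + 2 = k + 3 from rfl,
          show k + 1 - 2 = k - 1 from rfl] at *
        omega



/-- the number of allowed `l`-element subsets of `{1,1̄,…,n,n̄}` equals
`C(2n,l) - C(2n,l-2)`. -/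
theorem card_allowed_subsets (n l : ℕ) (hn : 1 ≤ n) (hl : 2 ≤ l) (hln : l ≤ n) :
    ((Finset.univ : Finset (Finset (Fin (2 * n)))).filter
        (fun I => I.card = l ∧ ¬ Forbidden I)).card
      = Nat.choose (2 * n) l - Nat.choose (2 * n) (l - 2) := by
  classical
  have hfe : ((Finset.univ : Finset (Finset (Fin (2 * n)))).filter
        (fun I => I.card = l ∧ ¬ Forbidden I))
      = ((Finset.univ : Finset (Finset (Fin (2 * n)))).filter
        (fun I => I.card = l ∧ ¬ Bad I)) := by
    apply Finset.filter_congr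
    intro I _
    rw [forbidden_iff_bad]
  have hA : ((Finset.univ : Finset (Finset (Fin (2 * n)))).filter
      (fun I => I.card = l ∧ ¬ Bad I)).card = A (2 * n) l := rfl
  rw [hfe, hA, A_val n l, if_neg (by omega), if_neg (by omega)]


end Paper
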